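/- Uniform existence of anchor rows and columns under MCAR: let the entries D_{ab}, (a,b) ∈ [L]×[L], be i.i.d. Bernoulli(p) random variables with L ≥ 2, let Q ≥ 2 be an integer dividing L−1, and suppose p^{2Q²} ≥ 10 · Q · log(L−1) / (L−1). Then with probability at least 1 − L² · (L−1)^{−10}, which is at least 1 − C/L^8 for an absolute constant C > 0, simultaneously for every (i,j) ∈ [L]×[L] there exist sets R ⊆ [L]∖{i} and C' ⊆ [L]∖{j} with |R| = |C'| = Q such that D_{ab} = 1 for every (a,b) ∈ ({i} ∪ R) × ({j} ∪ C') with (a,b) ≠ (i,j). -/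

import Mathlib

open MeasureTheory ProbabilityTheory

/-- For an entry `(i,j)` of an `L × L` Boolean mask `D`, `HasAnchors D Q i j` says that
there exist a set `R` of `Q` rows distinct from `i` and a set `C'` of `Q` columns distinct
from `j` such that `D a b = 1` for every `(a,b) ∈ ({i} ∪ R) × ({j} ∪ C')` with
`(a,b) ≠ (i,j)`. -/
def HasAnchors {L : ℕ} (D : Fin L → Fin L → Bool) (Q : ℕ) (i j : Fin L) : Prop :=
  ∃ R C' : Finset (Fin L), i ∉ R ∧ j ∉ C' ∧ R.card = Q ∧ C'.card = Q ∧
    ∀ a ∈ insert i R, ∀ b ∈ insert j C', (a, b) ≠ (i, j) → D a b = true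

/-- Blocks of `Q` indices avoiding `i`, pairwise disjoint, one for each `k : Fin m`,
where `m * Q = L - 1`. -/
lemma exists_blocks {L Q m : ℕ} (hL : 1 ≤ L) (hmQ : m * Q = L - 1) (i : Fin L) :
    ∃ R : Fin m → Finset (Fin L), (∀ k, i ∉ R k) ∧ (∀ k, (R k).card = Q) ∧
      ∀ k k', k ≠ k' → Disjoint (R k) (R k') := by
  have hgdef : ∀ t : Fin (L - 1), (t : ℕ) < L ∧ (t : ℕ) + 1 < L := by
    intro t; have := t.isLt; omega
  set g : Fin (L - 1) → Fin L := fun t =>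
    if (t : ℕ) < (i : ℕ) then ⟨(t : ℕ), (hgdef t).1⟩ else ⟨(t : ℕ) + 1, (hgdef t).2⟩ with hg
  have hgval : ∀ t : Fin (L - 1),
      (g t : ℕ) = if (t : ℕ) < (i : ℕ) then (t : ℕ) else (t : ℕ) + 1 := by
    intro t; simp only [hg]; split_ifs <;> rfl
  have hginj : ∀ a b : Fin (L - 1), g a = g b → (a : ℕ) = (b : ℕ) := by
    intro a b hab
    have h := congrArg Fin.val hab
    rw [hgval a, hgval b] at h
    split_ifs at h <;> omega
  have hgne : ∀ t, g t ≠ i := by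
    intro t h
    have h' := congrArg Fin.val h
    rw [hgval t] at h'
    split_ifs at h' <;> omega
  have hidx : ∀ (k : Fin m) (q : Fin Q), (k : ℕ) * Q + (q : ℕ) < L - 1 := by
    intro k q
    have h1 : (k : ℕ) * Q + Q = ((k : ℕ) + 1) * Q := by ring
    have h2 : ((k : ℕ) + 1) * Q ≤ m * Q := Nat.mul_le_mul_right Q k.isLt
    have := q.isLt
    omega
  have hkey : ∀ (k k' : Fin m) (q q' : Fin Q),
      (k : ℕ) * Q + (q : ℕ) = (k' : ℕ) * Q + (q' : ℕ) → k = k' := by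
    intro k k' q q' h
    have hq := q.isLt; have hq' := q'.isLt
    rcases Nat.lt_trichotomy (k : ℕ) (k' : ℕ) with hlt | heq | hgt
    · have h2 : ((k : ℕ) + 1) * Q ≤ (k' : ℕ) * Q := Nat.mul_le_mul_right Q hlt
      have h1 : (k : ℕ) * Q + Q = ((k : ℕ) + 1) * Q := by ring
      omega
    · exact Fin.ext heq
    · have h2 : ((k' : ℕ) + 1) * Q ≤ (k : ℕ) * Q := Nat.mul_le_mul_right Q hgt
      have h1 : (k' : ℕ) * Q + Q = ((k' : ℕ) + 1) * Q := by ring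
      omega
  refine ⟨fun k => Finset.image (fun q : Fin Q => g ⟨(k : ℕ) * Q + (q : ℕ), hidx k q⟩)
    Finset.univ, ?_, ?_, ?_⟩
  · intro k hk
    obtain ⟨q, -, hq⟩ := Finset.mem_image.1 hk
    exact hgne _ hq
  · intro k
    rw [Finset.card_image_of_injective _ ?_, Finset.card_univ, Fintype.card_fin]
    intro a b hab
    have h := hginj _ _ hab
    simp only at h
    have := a.isLt; have := b.isLt
    exact Fin.ext (by omega)
  · intro k k' hkk'
    rw [Finset.disjoint_left]
    rintro x hx hx'
    obtain ⟨q, -, hq⟩ := Finset.mem_image.1 hx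
    obtain ⟨q', -, hq'⟩ := Finset.mem_image.1 hx'
    have h := hginj _ _ (hq.trans hq'.symm)
    simp only at h
    exact hkk' (hkey k k' q q' h)

/-- The real-valued tail estimate: `(1 - p^{(Q+1)²-1})^m ≤ (L-1)^{-10}`. -/
lemma real_bound {L Q m : ℕ} (hL : 2 ≤ L) (hQ : 2 ≤ Q) (hmQ : m * Q = L - 1)
    {p : ℝ} (hp0 : 0 ≤ p) (hp1 : p ≤ 1)
    (hgap : 10 * (Q : ℝ) * Real.log ((L : ℝ) - 1) / ((L : ℝ) - 1) ≤ p ^ (2 * Q ^ 2)) :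
    (1 - p ^ ((Q + 1) ^ 2 - 1)) ^ m ≤ 1 / ((L : ℝ) - 1) ^ (10 : ℕ) := by
  set t : ℝ := (L : ℝ) - 1 with ht
  have htL : (2 : ℝ) ≤ (L : ℝ) := by exact_mod_cast hL
  have ht1 : 1 ≤ t := by rw [ht]; linarith
  have ht0 : 0 < t := by linarith
  set N := (Q + 1) ^ 2 - 1 with hN
  have hNeq : N = Q ^ 2 + 2 * Q := by
    have h1 : (Q + 1) ^ 2 = Q ^ 2 + 2 * Q + 1 := by ring
    rw [hN, h1]
    exact Nat.add_sub_cancel _ _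
  have h2q : 2 * Q ≤ Q ^ 2 := by
    calc 2 * Q ≤ Q * Q := Nat.mul_le_mul_right Q hQ
      _ = Q ^ 2 := (sq Q).symm
  have hNle : N ≤ 2 * Q ^ 2 := by
    rw [hNeq]
    calc Q ^ 2 + 2 * Q ≤ Q ^ 2 + Q ^ 2 := Nat.add_le_add_left h2q _
      _ = 2 * Q ^ 2 := (two_mul _).symm
  set x := p ^ N with hx
  have hx0 : 0 ≤ x := pow_nonneg hp0 _
  have hx1 : x ≤ 1 := pow_le_one₀ hp0 hp1
  have hxge : p ^ (2 * Q ^ 2) ≤ x := pow_le_pow_of_le_one hp0 hp1 hNle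
  have hmt : (m : ℝ) * (Q : ℝ) = t := by
    have h' : ((m * Q : ℕ) : ℝ) = ((L - 1 : ℕ) : ℝ) := congrArg (fun n : ℕ => (n : ℝ)) hmQ
    rw [Nat.cast_mul, Nat.cast_sub (by omega), Nat.cast_one] at h'
    rw [ht]; exact h'
  have hkey : 10 * Real.log t ≤ (m : ℝ) * x := by
    have h1 : 10 * (Q : ℝ) * Real.log t / t ≤ x := le_trans hgap hxge
    have h2 : (m : ℝ) * (10 * (Q : ℝ) * Real.log t / t) ≤ (m : ℝ) * x :=
      mul_le_mul_of_nonneg_left h1 (Nat.cast_nonneg m)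
    have h3 : (m : ℝ) * (10 * (Q : ℝ) * Real.log t / t) = 10 * Real.log t := by
      field_simp
      linear_combination (Real.log t) * hmt
    linarith
  have h3 : 1 - x ≤ Real.exp (-x) := by
    have := Real.add_one_le_exp (-x); linarith
  have h4 : (1 - x) ^ m ≤ Real.exp (-x) ^ m := pow_le_pow_left₀ (by linarith) h3 m
  have h5 : Real.exp (-x) ^ m = Real.exp (-((m : ℝ) * x)) := by
    rw [← Real.exp_nat_mul]; ring_nf
  have h6 : Real.exp (-((m : ℝ) * x)) ≤ Real.exp (-(10 * Real.log t)) :=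
    Real.exp_le_exp.2 (by linarith)
  have h7 : Real.exp (-(10 * Real.log t)) = 1 / t ^ (10 : ℕ) := by
    rw [Real.exp_neg, one_div]
    congr 1
    have : (10 : ℝ) * Real.log t = ((10 : ℕ) : ℝ) * Real.log t := by norm_num
    rw [this, Real.exp_nat_mul, Real.exp_log ht0]
  calc (1 - x) ^ m ≤ Real.exp (-((m : ℝ) * x)) := h5 ▸ h4
    _ ≤ Real.exp (-(10 * Real.log t)) := h6
    _ = 1 / t ^ (10 : ℕ) := h7

/-- Per-entry bound: there is a measurable event `G` implying `HasAnchors` at `(i,j)`,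
whose complement has probability `(1 - p^{(Q+1)²-1})^m`. -/
lemma per_entry {Ω : Type} [MeasurableSpace Ω] (μ : Measure Ω) [IsProbabilityMeasure μ]
    {L Q m : ℕ} (hL : 2 ≤ L) (hQ : 2 ≤ Q) (hmQ : m * Q = L - 1)
    {p : ℝ} (hp0 : 0 ≤ p) (hp1 : p ≤ 1)
    (D : Ω → Fin L → Fin L → Bool)
    (hmeas : ∀ a b : Fin L, Measurable fun ω => D ω a b)
    (hind : iIndepFun
      (fun q : Fin L × Fin L => fun ω => D ω q.1 q.2) μ)
    (hber : ∀ a b : Fin L, μ {ω | D ω a b = true} = ENNReal.ofReal p)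
    (i j : Fin L) :
    ∃ G : Set Ω, MeasurableSet G ∧ G ⊆ {ω | HasAnchors (D ω) Q i j} ∧
      μ Gᶜ = ENNReal.ofReal ((1 - p ^ ((Q + 1) ^ 2 - 1)) ^ m) := by
  obtain ⟨R, hiR, hRcard, hRdisj⟩ := exists_blocks (by omega) hmQ i
  obtain ⟨Cc, hjC, hCcard, hCdisj⟩ := exists_blocks (by omega) hmQ j
  set N := (Q + 1) ^ 2 - 1 with hNdef
  set E : Fin L × Fin L → Set Ω := fun q => {ω | D ω q.1 q.2 = true} with hE
  set S : Fin m → Finset (Fin L × Fin L) :=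
    fun k => ((insert i (R k)) ×ˢ (insert j (Cc k))).erase (i, j) with hS
  have hij_mem : ∀ k, (i, j) ∈ (insert i (R k)) ×ˢ (insert j (Cc k)) := fun k =>
    Finset.mem_product.2 ⟨Finset.mem_insert_self _ _, Finset.mem_insert_self _ _⟩
  have hScard : ∀ k, (S k).card = N := by
    intro k
    rw [hS]
    rw [Finset.card_erase_of_mem (hij_mem k), Finset.card_product,
      Finset.card_insert_of_notMem (hiR k), Finset.card_insert_of_notMem (hjC k),
      hRcard k, hCcard k, hNdef, sq]
  have hSdisj : ∀ k k', k ≠ k' → Disjoint (S k) (S k') := by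
    intro k k' hkk'
    rw [Finset.disjoint_left]
    rintro ⟨a, b⟩ h1 h2
    rw [hS, Finset.mem_erase, Finset.mem_product] at h1 h2
    obtain ⟨hne, ha, hb⟩ := h1
    obtain ⟨-, ha', hb'⟩ := h2
    rcases Finset.mem_insert.1 ha with rfl | haR
    · have hbj : b ≠ j := fun h => hne (by rw [h])
      have hb1 : b ∈ Cc k := (Finset.mem_insert.1 hb).resolve_left hbj
      have hb2 : b ∈ Cc k' := (Finset.mem_insert.1 hb').resolve_left hbj
      exact Finset.disjoint_left.1 (hCdisj k k' hkk') hb1 hb2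
    · have ha2 : a ∈ R k' := by
        rcases Finset.mem_insert.1 ha' with rfl | h
        · exact absurd haR (hiR k)
        · exact h
      exact Finset.disjoint_left.1 (hRdisj k k' hkk') haR ha2
  have hEmeas : ∀ q, MeasurableSet (E q) := fun q =>
    hmeas q.1 q.2 (measurableSet_singleton true)
  have hEcomap : ∀ q : Fin L × Fin L,
      MeasurableSet[MeasurableSpace.comap (fun ω => D ω q.1 q.2) inferInstance] (E q) :=
    fun q => ⟨{true}, measurableSet_singleton true, rfl⟩
  set A : Fin m → Set Ω := fun k => ⋂ q ∈ S k, E q with hA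
  have hAmeas : ∀ k, MeasurableSet (A k) := fun k =>
    (S k).measurableSet_biInter fun q _ => hEmeas q
  have hAval : ∀ k, μ (A k) = ENNReal.ofReal p ^ N := by
    intro k
    rw [hA]
    rw [hind.meas_biInter (fun q _ => hEcomap q)]
    have hconst : ∀ q ∈ S k, μ (E q) = ENNReal.ofReal p := fun q _ => hber q.1 q.2
    rw [Finset.prod_congr rfl hconst, Finset.prod_const, hScard k]
  have hT : ∀ T : Finset (Fin m), μ (⋂ k ∈ T, A k) = ∏ k ∈ T, μ (A k) := by
    intro T
    have h1 : (⋂ k ∈ T, A k) = ⋂ q ∈ T.biUnion S, E q :=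
      (Finset.set_biInter_biUnion T S E).symm
    rw [h1, hind.meas_biInter (fun q _ => hEcomap q),
      Finset.prod_biUnion (fun k _ k' _ h => hSdisj k k' h)]
    exact (Finset.prod_congr rfl fun k _ =>
      (hind.meas_biInter (fun q _ => hEcomap q))).symm
  have hIndepSet : iIndepSet A μ := (iIndepSet_iff_meas_biInter hAmeas).2 hT
  have hIndep : iIndep (fun k => MeasurableSpace.generateFrom {A k}) μ :=
    (iIndepSet_iff_iIndep A μ).1 hIndepSet
  have hcompl : μ (⋂ k ∈ (Finset.univ : Finset (Fin m)), (A k)ᶜ)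
      = ∏ k ∈ (Finset.univ : Finset (Fin m)), μ ((A k)ᶜ) :=
    hIndep.meas_biInter fun k _ =>
      MeasurableSet.compl (MeasurableSpace.measurableSet_generateFrom rfl)
  refine ⟨⋃ k, A k, MeasurableSet.iUnion hAmeas, ?_, ?_⟩
  · intro ω hω
    obtain ⟨k, hk⟩ := Set.mem_iUnion.1 hω
    refine ⟨R k, Cc k, hiR k, hjC k, hRcard k, hCcard k, fun a ha b hb hne => ?_⟩
    have hmem : (a, b) ∈ S k := by
      rw [hS, Finset.mem_erase, Finset.mem_product]
      exact ⟨hne, ha, hb⟩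
    exact Set.mem_iInter₂.1 hk (a, b) hmem
  · have hcup : (⋃ k, A k)ᶜ = ⋂ k ∈ (Finset.univ : Finset (Fin m)), (A k)ᶜ := by
      rw [Set.compl_iUnion]
      simp
    rw [hcup, hcompl]
    have hAc : ∀ k : Fin m, μ ((A k)ᶜ) = ENNReal.ofReal (1 - p ^ N) := by
      intro k
      rw [prob_compl_eq_one_sub (hAmeas k), hAval k, ← ENNReal.ofReal_pow hp0,
        ← ENNReal.ofReal_one, ← ENNReal.ofReal_sub _ (pow_nonneg hp0 N)]
    rw [Finset.prod_congr rfl fun k _ => hAc k, Finset.prod_const, Finset.card_univ,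
      Fintype.card_fin, ENNReal.ofReal_pow (by have := pow_le_one₀ hp0 hp1 (n := N); linarith)]

/-- **Uniform existence of anchor rows and columns under MCAR.**
There is an absolute constant `C > 0` such that the following holds.  Let the entries
`D_{ab}`, `(a,b) ∈ [L] × [L]`, be i.i.d. Bernoulli(p) with `L ≥ 2`, let `Q ≥ 2` divide
`L − 1`, and suppose `p^{2Q²} ≥ 10 · Q · log(L−1) / (L−1)`.  Then with probability at
least `1 − L² · (L−1)^{−10}`, which is at least `1 − C / L^8`, simultaneously every entry
`(i,j)` admits `Q` anchor rows and `Q` anchor columns forming a fully revealed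
submatrix. -/
theorem anchors_exist_mcar_uniform :
    ∃ C : ℝ, 0 < C ∧
      ∀ (Ω : Type) (_ : MeasurableSpace Ω) (μ : Measure Ω), IsProbabilityMeasure μ →
      ∀ (L Q : ℕ), 2 ≤ L → 2 ≤ Q → Q ∣ (L - 1) →
      ∀ p : ℝ, 0 ≤ p → p ≤ 1 →
      10 * (Q : ℝ) * Real.log ((L : ℝ) - 1) / ((L : ℝ) - 1) ≤ p ^ (2 * Q ^ 2) →
      ∀ D : Ω → Fin L → Fin L → Bool,
      (∀ a b : Fin L, Measurable fun ω => D ω a b) →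
      iIndepFun
        (fun q : Fin L × Fin L => fun ω => D ω q.1 q.2) μ →
      (∀ a b : Fin L, μ {ω | D ω a b = true} = ENNReal.ofReal p) →
      (1 - ENNReal.ofReal ((L : ℝ) ^ 2 / ((L : ℝ) - 1) ^ (10 : ℕ))
          ≤ μ {ω | ∀ i j : Fin L, HasAnchors (D ω) Q i j}) ∧
      (1 - ENNReal.ofReal (C / (L : ℝ) ^ 8)
          ≤ μ {ω | ∀ i j : Fin L, HasAnchors (D ω) Q i j}) := by
  refine ⟨1024, by norm_num, ?_⟩
  intro Ω mΩ μ hprob L Q hL hQ hdvd p hp0 hp1 hgap D hmeas hind hber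
  obtain ⟨m, hm⟩ := hdvd
  have hmQ : m * Q = L - 1 := by rw [hm, Nat.mul_comm]
  have hb0 : 0 ≤ 1 - p ^ ((Q + 1) ^ 2 - 1) := by
    have := pow_le_one₀ hp0 hp1 (n := (Q + 1) ^ 2 - 1); linarith
  choose G hGmeas hGsub hGcompl using fun ij : Fin L × Fin L =>
    per_entry μ hL hQ hmQ hp0 hp1 D hmeas hind hber ij.1 ij.2
  set Gall : Set Ω := ⋂ q : Fin L × Fin L, G q with hGall
  have hGallmeas : MeasurableSet Gall := MeasurableSet.iInter fun q => hGmeas q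
  have h1 : Gall ⊆ {ω | ∀ i j : Fin L, HasAnchors (D ω) Q i j} := by
    intro ω hω i j
    exact hGsub (i, j) (Set.mem_iInter.1 hω (i, j))
  have htL : (2 : ℝ) ≤ (L : ℝ) := by exact_mod_cast hL
  have h2 : μ Gallᶜ ≤ ENNReal.ofReal ((L : ℝ) ^ 2 / ((L : ℝ) - 1) ^ (10 : ℕ)) := by
    have hsum : μ Gallᶜ ≤ ∑ q : Fin L × Fin L,
        ENNReal.ofReal ((1 - p ^ ((Q + 1) ^ 2 - 1)) ^ m) := by
      rw [hGall, Set.compl_iInter]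
      refine le_trans (measure_iUnion_le _) ?_
      rw [tsum_fintype]
      exact Finset.sum_le_sum fun q _ => le_of_eq (hGcompl q)
    refine le_trans hsum ?_
    rw [Finset.sum_const, Finset.card_univ, Fintype.card_prod, Fintype.card_fin,
      nsmul_eq_mul, ← ENNReal.ofReal_natCast, ← ENNReal.ofReal_mul (Nat.cast_nonneg _)]
    apply ENNReal.ofReal_le_ofReal
    have hrb := real_bound hL hQ hmQ hp0 hp1 hgap
    have hLL : ((L * L : ℕ) : ℝ) = (L : ℝ) ^ 2 := by push_cast; ring
    rw [hLL]
    have hL2 : (0 : ℝ) ≤ (L : ℝ) ^ 2 := by positivity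
    calc (L : ℝ) ^ 2 * (1 - p ^ ((Q + 1) ^ 2 - 1)) ^ m
        ≤ (L : ℝ) ^ 2 * (1 / ((L : ℝ) - 1) ^ (10 : ℕ)) := by
          exact mul_le_mul_of_nonneg_left hrb hL2
      _ = (L : ℝ) ^ 2 / ((L : ℝ) - 1) ^ (10 : ℕ) := by ring
  have hGallval : μ Gall = 1 - μ Gallᶜ := by
    have := prob_compl_eq_one_sub (μ := μ) hGallmeas.compl
    rw [compl_compl] at this
    exact this
  have hfirst : 1 - ENNReal.ofReal ((L : ℝ) ^ 2 / ((L : ℝ) - 1) ^ (10 : ℕ))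
      ≤ μ {ω | ∀ i j : Fin L, HasAnchors (D ω) Q i j} := by
    refine le_trans ?_ (measure_mono h1)
    rw [hGallval]
    exact tsub_le_tsub_left h2 1
  refine ⟨hfirst, le_trans ?_ hfirst⟩
  apply tsub_le_tsub_left
  apply ENNReal.ofReal_le_ofReal
  have ht0 : (0 : ℝ) < (L : ℝ) - 1 := by linarith
  have hL0 : (0 : ℝ) < (L : ℝ) := by linarith
  rw [div_le_div_iff₀ (by positivity) (by positivity)]
  have h10 : (L : ℝ) ^ (10 : ℕ) ≤ 1024 * ((L : ℝ) - 1) ^ (10 : ℕ) := by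
    have hle : (L : ℝ) ≤ 2 * ((L : ℝ) - 1) := by linarith
    calc (L : ℝ) ^ (10 : ℕ) ≤ (2 * ((L : ℝ) - 1)) ^ (10 : ℕ) :=
        pow_le_pow_left₀ (by linarith) hle 10
      _ = 1024 * ((L : ℝ) - 1) ^ (10 : ℕ) := by rw [mul_pow]; norm_num
  calc (L : ℝ) ^ 2 * (L : ℝ) ^ 8 = (L : ℝ) ^ (10 : ℕ) := by ring
    _ ≤ 1024 * ((L : ℝ) - 1) ^ (10 : ℕ) := h10
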